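/- Let f : ℕ → ℝ satisfy f(0) = 0 and, for all n' ≥ 1, f(n') ≤ 2 + (1/n') · Σ_{i=1}^{n'} f(i-1). Then f(n') ≤ 4 ln(n') + 2 for all n' ≥ 1. -/

import Mathlib

lemma log_succ_gap (n : ℕ) (hn : 1 ≤ n) :
    (1 : ℝ) / (n + 1) ≤ Real.log (n + 1) - Real.log n := by
  have hn0 : (0 : ℝ) < n := by exact_mod_cast hn
  have h := Real.log_le_sub_one_of_pos (x := (n : ℝ) / (n + 1)) (by positivity)
  rw [Real.log_div (by positivity) (by positivity)] at h
  have he : (n : ℝ) / (n + 1) - 1 = -(1 / (n + 1)) := by field_simp; ring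
  linarith [he ▸ h]

lemma sum_log_le (n : ℕ) :
    ∑ i ∈ Finset.range n, Real.log i ≤ n * Real.log n - n + 1 := by
  induction n with
  | zero => simp
  | succ n ih =>
    rw [Finset.sum_range_succ]
    rcases Nat.eq_zero_or_pos n with h | h
    · subst h; simp
    · have hg := log_succ_gap n h
      have hn0 : (0 : ℝ) < n := by exact_mod_cast h
      have h1 : (1 : ℝ) ≤ ((n : ℝ) + 1) * (Real.log (n + 1) - Real.log n) := by
        have := mul_le_mul_of_nonneg_left hg (by positivity : (0:ℝ) ≤ (n:ℝ)+1)
        rwa [mul_one_div, div_self (by positivity)] at this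
      push_cast
      nlinarith [h1, ih]

/-- the recursion `f 0 = 0`, `f n ≤ 2 + (1/n) ∑_{i=1}^{n} f (i-1)`
implies `f n ≤ 4 ln n + 2` for all `n ≥ 1`. -/
theorem stmt_6 (f : ℕ → ℝ) (h0 : f 0 = 0)
    (hrec : ∀ n : ℕ, 1 ≤ n →
      f n ≤ 2 + (1 / (n : ℝ)) * ∑ i ∈ Finset.Icc 1 n, f (i - 1)) :
    ∀ n : ℕ, 1 ≤ n → f n ≤ 4 * Real.log n + 2 := by
  intro n
  induction n using Nat.strong_induction_on with
  | _ n ih =>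
  intro hn
  have hsum : ∑ i ∈ Finset.Icc 1 n, f (i - 1) = ∑ i ∈ Finset.range n, f i := by
    rw [show Finset.Icc 1 n = Finset.Ico 1 (n+1) from by rw [Finset.Ico_add_one_right_eq_Icc],
      Finset.sum_Ico_eq_sum_range]
    simp
  rcases eq_or_lt_of_le hn with h1 | h2
  · -- n = 1
    have h := hrec 1 le_rfl
    simp [h0] at h
    rw [← h1]
    simpa using h
  · -- n ≥ 2
    have hn2 : 2 ≤ n := h2
    have hn0 : (0 : ℝ) < n := by exact_mod_cast Nat.lt_of_lt_of_le Nat.zero_lt_one hn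
    have hfb : ∀ i ∈ Finset.range n, f i ≤ 4 * Real.log i + 2 := by
      intro i hi
      rcases Nat.eq_zero_or_pos i with h | h
      · subst h; simp [h0]
      · exact ih i (Finset.mem_range.mp hi) h
    have hS : ∑ i ∈ Finset.range n, f i
        ≤ 4 * ((n : ℝ) * Real.log n - n + 1) + 2 * n := by
      calc ∑ i ∈ Finset.range n, f i
          ≤ ∑ i ∈ Finset.range n, (4 * Real.log i + 2) := Finset.sum_le_sum hfb
        _ = 4 * (∑ i ∈ Finset.range n, Real.log i) + 2 * n := by
            rw [Finset.sum_add_distrib, ← Finset.mul_sum]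
            simp [mul_comm]
        _ ≤ 4 * ((n : ℝ) * Real.log n - n + 1) + 2 * n := by
            have := sum_log_le n
            nlinarith
    have h := hrec n hn
    rw [hsum] at h
    have hdiv : (1 / (n : ℝ)) * (∑ i ∈ Finset.range n, f i)
        ≤ (1 / (n : ℝ)) * (4 * ((n : ℝ) * Real.log n - n + 1) + 2 * n) :=
      mul_le_mul_of_nonneg_left hS (by positivity)
    have hval : (1 / (n : ℝ)) * (4 * ((n : ℝ) * Real.log n - n + 1) + 2 * n)
        = 4 * Real.log n - 2 + 4 / n := by
      field_simp
      ring
    have h4n : 4 / (n : ℝ) ≤ 2 := by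
      rw [div_le_iff₀ hn0]
      have : (2 : ℝ) ≤ n := by exact_mod_cast hn2
      linarith
    linarith [h, hdiv, hval ▸ hdiv]
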